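/- Let (A,G,α) be a Banach algebra dynamical system with ‖α_s‖ ≤ C_α for all s, X a Banach space, π : A → B(X) a bounded representation, and ω a weight on G. Define for h ∈ C_c(G,X), a ∈ A, s ∈ G: (π̃(a)h)(s) := π(α_s⁻¹(a)) h(s). Then π̃(a) extends to a bounded operator on L^p(G,X,ω) for 1 ≤ p < ∞, π̃ is an algebra homomorphism, and ‖π̃(a)‖ ≤ C_α ‖π‖ ‖a‖ for all a ∈ A. -/

import Mathlib

open MeasureTheory

open Pointwise in
/-- Steinhaus theorem for measurable sets of positive finite measure, for Haar measures that
are inner regular for finite measure sets with respect to compact sets. -/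
lemma my_steinhaus_aux {G : Type*} [Group G] [TopologicalSpace G] [IsTopologicalGroup G]
    [LocallyCompactSpace G] [MeasurableSpace G] [BorelSpace G]
    (ν : Measure G) [ν.IsHaarMeasure] [ν.InnerRegularCompactLTTop]
    {E : Set G} (hE : MeasurableSet E) (h0 : ν E ≠ 0) (hfin : ν E ≠ ⊤) :
    E / E ∈ nhds (1 : G) := by
  obtain ⟨K, hKE, hKc, hKpos⟩ : ∃ K ⊆ E, IsCompact K ∧ 0 < ν K := by
    obtain ⟨K, hKE, hKc, hlt⟩ := hE.exists_isCompact_lt_add hfin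
      (ENNReal.half_pos h0).ne'
    refine ⟨K, hKE, hKc, ?_⟩
    by_contra hcon
    rw [not_lt, le_zero_iff] at hcon
    rw [hcon, zero_add] at hlt
    exact absurd hlt (not_lt.2 ENNReal.half_le_self)
  have hLE : closure K ⊆ E := hKc.closure_subset_measurableSet hE hKE
  have hLpos : 0 < ν (closure K) := hKpos.trans_le (measure_mono subset_closure)
  filter_upwards [eventually_nhds_one_measure_smul_diff_lt hKc.closure isClosed_closure
    hLpos.ne' (μ := ν)] with g hg
  have hnd : ¬Disjoint (g • closure K) (closure K) := fun hd ↦ by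
    rw [hd.symm.sdiff_eq_right, measure_smul] at hg
    exact hg.false
  rcases Set.not_disjoint_iff.1 hnd with ⟨_, ⟨x, hxK, rfl⟩, hgxK⟩
  simpa using Set.div_mem_div (hLE hgxK) (hLE hxK)

open Pointwise in
/-- A measurable nonnegative submultiplicative function on a locally compact group is
bounded on compact sets. -/
lemma my_loc_bdd {G : Type*} [Group G] [TopologicalSpace G] [IsTopologicalGroup G]
    [LocallyCompactSpace G] [MeasurableSpace G] [BorelSpace G]
    (ω : G → ℝ) (hmeas : Measurable ω) (hnn : ∀ s, 0 ≤ ω s)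
    (hsub : ∀ s t, ω (s * t) ≤ ω s * ω t)
    {K : Set G} (hK : IsCompact K) : ∃ M : ℝ, ∀ s ∈ K, ω s ≤ M := by
  classical
  set ψ : G → ℝ := fun s => max (ω s) (ω s⁻¹) with hψdef
  have hψm : Measurable ψ := hmeas.max (hmeas.comp measurable_inv)
  have hψnn : ∀ s, 0 ≤ ψ s := fun s => le_trans (hnn s) (le_max_left _ _)
  have hψω : ∀ s, ω s ≤ ψ s := fun s => le_max_left _ _
  have hψinv : ∀ s, ψ s⁻¹ = ψ s := fun s => by simp [hψdef, max_comm]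
  have hψsub : ∀ s t, ψ (s * t) ≤ ψ s * ψ t := by
    intro s t
    have h1 : ω (s * t) ≤ ψ s * ψ t :=
      (hsub s t).trans (mul_le_mul (le_max_left _ _) (le_max_left _ _) (hnn t) (hψnn s))
    have h2 : ω ((s * t)⁻¹) ≤ ψ s * ψ t := by
      rw [mul_inv_rev]
      refine (hsub _ _).trans ?_
      have := mul_le_mul (le_max_right (ω t) (ω t⁻¹)) (le_max_right (ω s) (ω s⁻¹))
        (hnn s⁻¹) (hψnn t)
      calc ω t⁻¹ * ω s⁻¹ ≤ ψ t * ψ s := this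
        _ = ψ s * ψ t := mul_comm _ _
    exact max_le h1 h2
  -- a convenient regular Haar measure
  let ν : Measure G := Measure.haar
  obtain ⟨K0, hK0c, hK0mem⟩ := exists_compact_mem_nhds (1 : G)
  have hUopen : IsOpen (interior K0) := isOpen_interior
  have hU1 : (1 : G) ∈ interior K0 := mem_interior_iff_mem_nhds.2 hK0mem
  have hUpos : 0 < ν (interior K0) := hUopen.measure_pos ν ⟨1, hU1⟩
  have hUfin : ν (interior K0) ≠ ⊤ :=
    (lt_of_le_of_lt (measure_mono interior_subset) hK0c.measure_lt_top).ne
  have hcover : (⋃ n : ℕ, ({s | ψ s ≤ (n : ℝ)} ∩ interior K0)) = interior K0 := by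
    ext s
    simp only [Set.mem_iUnion, Set.mem_inter_iff, Set.mem_setOf_eq]
    constructor
    · rintro ⟨n, _, hs⟩; exact hs
    · intro hs
      obtain ⟨n, hn⟩ := exists_nat_ge (ψ s)
      exact ⟨n, hn, hs⟩
  have hmeasE : ∀ n : ℕ, MeasurableSet ({s | ψ s ≤ (n : ℝ)} ∩ interior K0) := fun n =>
    (hψm measurableSet_Iic).inter hUopen.measurableSet
  obtain ⟨n, hn⟩ : ∃ n : ℕ, ν ({s | ψ s ≤ (n : ℝ)} ∩ interior K0) ≠ 0 := by
    by_contra hc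
    push_neg at hc
    have h0 := measure_iUnion_null (μ := ν)
      (s := fun n : ℕ => {s | ψ s ≤ (n : ℝ)} ∩ interior K0) hc
    rw [hcover] at h0
    exact hUpos.ne' h0
  set E := {s | ψ s ≤ (n : ℝ)} ∩ interior K0 with hEdef
  have hEfin : ν E ≠ ⊤ :=
    ne_top_of_le_ne_top hUfin (measure_mono Set.inter_subset_right)
  have hst : E / E ∈ nhds (1 : G) := my_steinhaus_aux ν (hmeasE n) hn hEfin
  have hbd : ∀ x ∈ E / E, ψ x ≤ (n : ℝ) * n := by
    rintro x hx
    rw [Set.mem_div] at hx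
    obtain ⟨a, ha, b, hb, rfl⟩ := hx
    calc ψ (a / b) = ψ (a * b⁻¹) := by rw [div_eq_mul_inv]
      _ ≤ ψ a * ψ b⁻¹ := hψsub _ _
      _ = ψ a * ψ b := by rw [hψinv]
      _ ≤ (n : ℝ) * n := mul_le_mul ha.1 hb.1 (hψnn b) (Nat.cast_nonneg n)
  obtain ⟨t, hts, hcov⟩ := hK.elim_nhds_subcover (fun x => (fun y => x * y) '' (E / E))
    (by
      intro x _
      have hmap := (Homeomorph.mulLeft x).map_nhds_eq 1
      have himg : (fun y => x * y) '' (E / E) ∈ Filter.map (Homeomorph.mulLeft x) (nhds 1) :=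
        Filter.image_mem_map hst
      rw [hmap] at himg
      simpa using himg)
  refine ⟨(∑ x ∈ t, ψ x) * ((n : ℝ) * n), ?_⟩
  intro s hs
  obtain ⟨x, hxt, hsx⟩ := Set.mem_iUnion₂.1 (hcov hs)
  obtain ⟨v, hv, rfl⟩ := hsx
  have h2 : ψ (x * v) ≤ ψ x * ψ v := hψsub x v
  have h3 : ψ v ≤ (n : ℝ) * n := hbd v hv
  have h4 : ψ x ≤ ∑ y ∈ t, ψ y := Finset.single_le_sum (fun y _ => hψnn y) hxt
  have h5 : (0 : ℝ) ≤ ∑ y ∈ t, ψ y := Finset.sum_nonneg (fun y _ => hψnn y)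
  calc ω (x * v) ≤ ψ (x * v) := hψω _
    _ ≤ ψ x * ψ v := h2
    _ ≤ (∑ y ∈ t, ψ y) * ((n : ℝ) * n) :=
      mul_le_mul h4 h3 (hψnn v) h5

/-- Integrability of `‖h‖^p · ω` for `h` continuous with compact support and `ω` a
measurable nonnegative submultiplicative weight. -/
lemma my_integrable {G X : Type*} [Group G] [TopologicalSpace G] [IsTopologicalGroup G]
    [LocallyCompactSpace G] [MeasurableSpace G] [BorelSpace G]
    [NormedAddCommGroup X]
    (μ : Measure G) [μ.IsHaarMeasure]
    (ω : G → ℝ) (hmeas : Measurable ω) (hnn : ∀ s, 0 ≤ ω s)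
    (hsub : ∀ s t, ω (s * t) ≤ ω s * ω t)
    (p : ℝ) (hp : 1 ≤ p)
    (h : G → X) (hc : Continuous h) (hsupp : HasCompactSupport h) :
    Integrable (fun s => ‖h s‖ ^ p * ω s) μ := by
  have hp0 : p ≠ 0 := by positivity
  have hφc : Continuous (fun s => ‖h s‖ ^ p) :=
    Continuous.rpow_const hc.norm (fun s => Or.inr (by positivity))
  have hφsupp : HasCompactSupport (fun s => ‖h s‖ ^ p) := by
    apply hsupp.comp_left (g := fun x : X => ‖x‖ ^ p)
    simp [Real.zero_rpow hp0]
  obtain ⟨M, hM⟩ := my_loc_bdd ω hmeas hnn hsub (hsupp.norm)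
  have hφint : Integrable (fun s => (max M 0) * (‖h s‖ ^ p)) μ :=
    (hφc.integrable_of_hasCompactSupport hφsupp).const_mul _
  refine hφint.mono' ?_ ?_
  · exact ((hc.norm.measurable.pow_const p).mul hmeas).aestronglyMeasurable
  · refine Filter.Eventually.of_forall (fun s => ?_)
    rw [Real.norm_eq_abs, abs_of_nonneg (mul_nonneg (by positivity) (hnn s))]
    by_cases hs : s ∈ tsupport fun x => ‖h x‖
    · have : ω s ≤ max M 0 := le_trans (hM s hs) (le_max_left _ _)
      have hφnn : (0 : ℝ) ≤ ‖h s‖ ^ p := by positivity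
      calc ‖h s‖ ^ p * ω s ≤ ‖h s‖ ^ p * max M 0 := by
            exact mul_le_mul_of_nonneg_left this hφnn
        _ = max M 0 * ‖h s‖ ^ p := mul_comm _ _
    · have hz : ‖h s‖ = 0 := image_eq_zero_of_notMem_tsupport (f := fun x => ‖h x‖) hs
      rw [hz, Real.zero_rpow hp0, zero_mul, mul_zero]

/-- For a Banach algebra dynamical system `(A, G, α)` with `α` uniformly bounded by
`C_α`, a bounded representation `π : A → B(X)` and a weight `ω` on `G`, the induced
map `(π̃(a) h)(s) := π(α_{s⁻¹}(a)) h(s)` is an algebra homomorphism and satisfies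
`‖π̃(a) h‖_{p,ω} ≤ C_α ‖π‖ ‖a‖ ‖h‖_{p,ω}` on `C_c(G, X)`, hence extends to a bounded
operator on `L^p(G, X, ω)` of norm at most `C_α ‖π‖ ‖a‖`. -/
theorem stmt10 {A G X : Type*} [NormedRing A] [CompleteSpace A] [NormedAlgebra ℂ A]
    [NormedAddCommGroup X] [NormedSpace ℂ X] [CompleteSpace X]
    [Group G] [TopologicalSpace G] [IsTopologicalGroup G] [LocallyCompactSpace G]
    [MeasurableSpace G] [BorelSpace G]
    (μ : Measure G) [μ.IsHaarMeasure]
    (α : G →* (A ≃ₐ[ℂ] A)) (hcont : ∀ a : A, Continuous fun s => α s a)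
    (Cα : ℝ) (hα : ∀ (s : G) (a : A), ‖α s a‖ ≤ Cα * ‖a‖)
    (π : A →L[ℂ] X →L[ℂ] X) (hπ : ∀ a b, π (a * b) = π a * π b)
    (ω : G → ℝ) (hmeas : Measurable ω) (hnn : ∀ s, 0 ≤ ω s)
    (hsub : ∀ s t, ω (s * t) ≤ ω s * ω t) (hω0 : ∃ s, ω s ≠ 0)
    (p : ℝ) (hp : 1 ≤ p) :
    (∀ (a b : A) (h : G → X) (s : G),
        π (α s⁻¹ (a * b)) (h s) = π (α s⁻¹ a) (π (α s⁻¹ b) (h s))) ∧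
      ∀ (a : A) (h : G → X), Continuous h → HasCompactSupport h →
        (∫ s, ‖π (α s⁻¹ a) (h s)‖ ^ p * ω s ∂μ) ^ (1 / p)
          ≤ Cα * ‖π‖ * ‖a‖ * (∫ s, ‖h s‖ ^ p * ω s ∂μ) ^ (1 / p) := by
  have hp0 : p ≠ 0 := by positivity
  have hip0 : (1 : ℝ) / p ≠ 0 := by positivity
  constructor
  · intro a b h s
    rw [map_mul, hπ]
    rfl
  · intro a h hc hsupp
    by_cases ha : ‖a‖ = 0
    · have ha0 : a = 0 := norm_eq_zero.mp ha
      subst ha0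
      simp only [map_zero, ContinuousLinearMap.zero_apply, norm_zero, Real.zero_rpow hp0,
        zero_mul, integral_zero, mul_zero, Real.zero_rpow hip0]
      positivity
    · have ha' : 0 < ‖a‖ := lt_of_le_of_ne (norm_nonneg a) (Ne.symm ha)
      have hCα : 0 ≤ Cα := by
        have h1 : (0 : ℝ) ≤ Cα * ‖a‖ := le_trans (norm_nonneg _) (hα 1 a)
        nlinarith
      set Kc : ℝ := Cα * ‖π‖ * ‖a‖ with hKdef
      have hKnn : 0 ≤ Kc := by positivity
      have hpt : ∀ s, ‖π (α s⁻¹ a) (h s)‖ ≤ Kc * ‖h s‖ := by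
        intro s
        calc ‖π (α s⁻¹ a) (h s)‖ ≤ ‖π (α s⁻¹ a)‖ * ‖h s‖ :=
              ContinuousLinearMap.le_opNorm _ _
          _ ≤ (‖π‖ * ‖α s⁻¹ a‖) * ‖h s‖ :=
              mul_le_mul_of_nonneg_right (π.le_opNorm _) (norm_nonneg _)
          _ ≤ (‖π‖ * (Cα * ‖a‖)) * ‖h s‖ :=
              mul_le_mul_of_nonneg_right
                (mul_le_mul_of_nonneg_left (hα s⁻¹ a) π.opNorm_nonneg)
                (norm_nonneg (h s))
          _ = Kc * ‖h s‖ := by rw [hKdef]; ring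
      have hgint : Integrable (fun s => ‖h s‖ ^ p * ω s) μ :=
        my_integrable μ ω hmeas hnn hsub p hp h hc hsupp
      have hdom : ∀ s, ‖π (α s⁻¹ a) (h s)‖ ^ p * ω s ≤ Kc ^ p * (‖h s‖ ^ p * ω s) := by
        intro s
        have h1 : ‖π (α s⁻¹ a) (h s)‖ ^ p ≤ (Kc * ‖h s‖) ^ p :=
          Real.rpow_le_rpow (norm_nonneg _) (hpt s) (by positivity)
        have h2 : (Kc * ‖h s‖) ^ p = Kc ^ p * ‖h s‖ ^ p :=
          Real.mul_rpow hKnn (norm_nonneg _)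
        calc ‖π (α s⁻¹ a) (h s)‖ ^ p * ω s ≤ (Kc * ‖h s‖) ^ p * ω s :=
              mul_le_mul_of_nonneg_right h1 (hnn s)
          _ = Kc ^ p * (‖h s‖ ^ p * ω s) := by rw [h2]; ring
      have hint : (∫ s, ‖π (α s⁻¹ a) (h s)‖ ^ p * ω s ∂μ)
          ≤ ∫ s, Kc ^ p * (‖h s‖ ^ p * ω s) ∂μ := by
        apply integral_mono_of_nonneg
        · exact Filter.Eventually.of_forall
            (fun s => mul_nonneg (by positivity) (hnn s))
        · exact hgint.const_mul _
        · exact Filter.Eventually.of_forall hdom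
      have hsm : ∫ s, Kc ^ p * (‖h s‖ ^ p * ω s) ∂μ
          = Kc ^ p * ∫ s, ‖h s‖ ^ p * ω s ∂μ := by
        simpa [smul_eq_mul] using
          integral_smul (μ := μ) (Kc ^ p) (fun s => ‖h s‖ ^ p * ω s)
      rw [hsm] at hint
      have hInn : 0 ≤ ∫ s, ‖h s‖ ^ p * ω s ∂μ :=
        integral_nonneg (fun s => mul_nonneg (by positivity) (hnn s))
      have hLnn : 0 ≤ ∫ s, ‖π (α s⁻¹ a) (h s)‖ ^ p * ω s ∂μ :=
        integral_nonneg (fun s => mul_nonneg (by positivity) (hnn s))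
      calc (∫ s, ‖π (α s⁻¹ a) (h s)‖ ^ p * ω s ∂μ) ^ (1 / p)
          ≤ (Kc ^ p * ∫ s, ‖h s‖ ^ p * ω s ∂μ) ^ (1 / p) :=
            Real.rpow_le_rpow hLnn hint (by positivity)
        _ = (Kc ^ p) ^ (1 / p) * (∫ s, ‖h s‖ ^ p * ω s ∂μ) ^ (1 / p) :=
            Real.mul_rpow (by positivity) hInn
        _ = Kc * (∫ s, ‖h s‖ ^ p * ω s ∂μ) ^ (1 / p) := by
            rw [← Real.rpow_mul hKnn, mul_one_div_cancel hp0, Real.rpow_one]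
        _ = Cα * ‖π‖ * ‖a‖ * (∫ s, ‖h s‖ ^ p * ω s ∂μ) ^ (1 / p) := by rw [hKdef]
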